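/- Let M be a metric space with base point 0 that is either unbounded or not uniformly discrete. Then Lip_0(M) contains a Daugavet-point, i.e., there exists f ∈ S_{Lip_0(M)} that is a Daugavet-point of the Banach space Lip_0(M). -/

import Mathlib

open Metric Set Filter NNReal

noncomputable section

namespace DeltaPaper

/-- The topological dual of a normed space (the former Mathlib `NormedSpace.Dual`). -/
abbrev NormedSpace.Dual (𝕜 : Type*) (E : Type*) [NontriviallyNormedField 𝕜]
    [SeminormedAddCommGroup E] [NormedSpace 𝕜 E] : Type _ :=
  E →L[𝕜] 𝕜

/-! ### Generic Banach space notions -/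

variable {X : Type*} [NormedAddCommGroup X] [NormedSpace ℝ X]

/-- `x` is a Daugavet-point: every slice of the unit ball contains, for every `ε > 0`,
an element at distance at least `2 - ε` from `x`. -/
def IsDaugavetPoint (x : X) : Prop :=
  ∀ (φ : NormedSpace.Dual ℝ X) (α : ℝ), ‖φ‖ = 1 → 0 < α → ∀ ε > 0,
    ∃ y : X, ‖y‖ ≤ 1 ∧ 1 - α < φ y ∧ 2 - ε ≤ ‖x - y‖

/-- `x` is a Δ-point: every slice of the unit ball containing `x` contains, for every
`ε > 0`, an element at distance at least `2 - ε` from `x`. -/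
def IsDeltaPoint (x : X) : Prop :=
  ∀ (φ : NormedSpace.Dual ℝ X) (α : ℝ), ‖φ‖ = 1 → 0 < α → 1 - α < φ x → ∀ ε > 0,
    ∃ y : X, ‖y‖ ≤ 1 ∧ 1 - α < φ y ∧ 2 - ε ≤ ‖x - y‖

/-- `x*` is a w*-Daugavet-point of the dual of `X`. -/
def IsWeakStarDaugavetPoint (f : NormedSpace.Dual ℝ X) : Prop :=
  ∀ (x : X) (α : ℝ), ‖x‖ = 1 → 0 < α → ∀ ε > 0,
    ∃ g : NormedSpace.Dual ℝ X, ‖g‖ ≤ 1 ∧ 1 - α < g x ∧ 2 - ε ≤ ‖f - g‖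

/-- `x*` is a w*-Δ-point of the dual of `X`. -/
def IsWeakStarDeltaPoint (f : NormedSpace.Dual ℝ X) : Prop :=
  ∀ (x : X) (α : ℝ), ‖x‖ = 1 → 0 < α → 1 - α < f x → ∀ ε > 0,
    ∃ g : NormedSpace.Dual ℝ X, ‖g‖ ≤ 1 ∧ 1 - α < g x ∧ 2 - ε ≤ ‖f - g‖

/-- `x` is a denting point of the unit ball: it lies in slices of the unit ball of
arbitrarily small diameter. -/
def IsDentingPoint (x : X) : Prop :=
  ‖x‖ ≤ 1 ∧ ∀ ε > 0, ∃ (φ : NormedSpace.Dual ℝ X) (α : ℝ), ‖φ‖ = 1 ∧ 0 < α ∧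
    1 - α < φ x ∧ Metric.diam {y : X | ‖y‖ ≤ 1 ∧ 1 - α < φ y} < ε

/-- The Kuratowski measure of non-compactness of a set: the infimum of all `ε > 0`
such that the set can be covered by finitely many sets of diameter less than `ε`. -/
def kuratowski {Y : Type*} [PseudoMetricSpace Y] (A : Set Y) : ℝ :=
  sInf {ε : ℝ | 0 < ε ∧ ∃ 𝒞 : Finset (Set Y), (A ⊆ ⋃ B ∈ 𝒞, B) ∧ ∀ B ∈ 𝒞, Metric.diam B < ε}

/-! ### The space of Lipschitz functions vanishing at a base point -/

variable {M : Type*} [PseudoMetricSpace M]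

/-- The least Lipschitz constant of a function. -/
def lipConst (f : M → ℝ) : ℝ≥0 := sInf {K | LipschitzWith K f}

theorem lipschitzWith_lipConst {f : M → ℝ} (hf : ∃ K, LipschitzWith K f) :
    LipschitzWith (lipConst f) f := by
  obtain ⟨K₀, hK₀⟩ := hf
  rw [lipschitzWith_iff_dist_le_mul]
  intro x y
  rcases le_or_gt (dist x y) 0 with h | h
  · have h0 : dist x y = 0 := le_antisymm h dist_nonneg
    have := hK₀.dist_le_mul x y
    rw [h0, mul_zero] at this ⊢
    exact this
  · rw [← div_le_iff₀ h]
    have hnn : 0 ≤ dist (f x) (f y) / dist x y := by positivity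
    rw [← Real.coe_toNNReal _ hnn, NNReal.coe_le_coe]
    refine le_csInf ⟨K₀, hK₀⟩ ?_
    intro K hK
    rw [← NNReal.coe_le_coe, Real.coe_toNNReal _ hnn, div_le_iff₀ h]
    exact hK.dist_le_mul x y

theorem lipConst_le {f : M → ℝ} {K : ℝ≥0} (hK : LipschitzWith K f) : lipConst f ≤ K :=
  csInf_le (OrderBot.bddBelow _) hK

theorem lipschitzWith_smul {f : M → ℝ} {K : ℝ≥0} (hK : LipschitzWith K f) (c : ℝ) :
    LipschitzWith (‖c‖₊ * K) (c • f) := by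
  rw [lipschitzWith_iff_dist_le_mul] at *
  intro x y
  have : dist ((c • f) x) ((c • f) y) = ‖c‖ * dist (f x) (f y) := by
    simp only [Pi.smul_apply, smul_eq_mul, Real.dist_eq, ← mul_sub, abs_mul, Real.norm_eq_abs]
  rw [this, NNReal.coe_mul, coe_nnnorm, mul_assoc]
  exact mul_le_mul_of_nonneg_left (hK x y) (norm_nonneg c)

variable (M) in
/-- The submodule of `M → ℝ` consisting of Lipschitz functions vanishing at the
base point `z`. -/
def Lip0 (z : M) : Submodule ℝ (M → ℝ) where
  carrier := {f | (∃ K, LipschitzWith K f) ∧ f z = 0}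
  add_mem' := by
    rintro f g ⟨⟨K, hK⟩, hf0⟩ ⟨⟨L, hL⟩, hg0⟩
    exact ⟨⟨K + L, hK.add hL⟩, by simp [hf0, hg0]⟩
  zero_mem' := ⟨⟨0, LipschitzWith.const' 0⟩, rfl⟩
  smul_mem' := by
    rintro c f ⟨⟨K, hK⟩, hf0⟩
    exact ⟨⟨‖c‖₊ * K, lipschitzWith_smul hK c⟩, by simp [hf0]⟩

variable {z : M}

instance : NormedAddCommGroup ↥(Lip0 M z) :=
  AddGroupNorm.toNormedAddCommGroup
    { toFun := fun f => ((lipConst (f : M → ℝ) : ℝ≥0) : ℝ)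
      map_zero' := by
        have h0 : lipConst (0 : M → ℝ) = 0 :=
          le_antisymm (lipConst_le (by simpa using LipschitzWith.const' (0 : ℝ))) bot_le
        show ((lipConst ((0 : ↥(Lip0 M z)) : M → ℝ) : ℝ≥0) : ℝ) = 0
        rw [show ((0 : ↥(Lip0 M z)) : M → ℝ) = 0 from rfl, h0, NNReal.coe_zero]
      add_le' := by
        intro f g
        have hf := lipschitzWith_lipConst f.2.1
        have hg := lipschitzWith_lipConst g.2.1
        have : lipConst ((f + g : ↥(Lip0 M z)) : M → ℝ) ≤
            lipConst (f : M → ℝ) + lipConst (g : M → ℝ) := by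
          refine lipConst_le ?_
          have := hf.add hg
          exact this
        exact_mod_cast this
      neg' := by
        intro f
        show ((lipConst ((-f : ↥(Lip0 M z)) : M → ℝ) : ℝ≥0) : ℝ) = _
        rw [show ((-f : ↥(Lip0 M z)) : M → ℝ) = -(f : M → ℝ) from rfl]
        unfold lipConst
        congr 2
        ext K
        exact ⟨fun hK => by simpa using hK.neg, fun hK => hK.neg⟩
      eq_zero_of_map_eq_zero' := by
        intro f hf
        replace hf : ((lipConst (f : M → ℝ) : ℝ≥0) : ℝ) = 0 := hf
        have h0 : lipConst (f : M → ℝ) = 0 := by exact_mod_cast hf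
        have hl : LipschitzWith 0 (f : M → ℝ) := h0 ▸ lipschitzWith_lipConst f.2.1
        ext x
        have := hl.dist_le_mul x z
        simp only [NNReal.coe_zero, zero_mul] at this
        have hxz : (f : M → ℝ) x = (f : M → ℝ) z :=
          dist_le_zero.mp this
        simpa [f.2.2] using hxz }

theorem Lip0.norm_def (f : ↥(Lip0 M z)) : ‖f‖ = ((lipConst (f : M → ℝ) : ℝ≥0) : ℝ) := rfl

theorem Lip0.lipschitzWith (f : ↥(Lip0 M z)) : LipschitzWith (lipConst (f : M → ℝ)) (f : M → ℝ) :=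
  lipschitzWith_lipConst f.2.1

instance : NormedSpace ℝ ↥(Lip0 M z) where
  norm_smul_le c f := by
    have : lipConst ((c • f : ↥(Lip0 M z)) : M → ℝ) ≤ ‖c‖₊ * lipConst (f : M → ℝ) :=
      lipConst_le (lipschitzWith_smul (Lip0.lipschitzWith f) c)
    calc ‖c • f‖ = ((lipConst ((c • f : ↥(Lip0 M z)) : M → ℝ) : ℝ≥0) : ℝ) := rfl
      _ ≤ ((‖c‖₊ * lipConst (f : M → ℝ) : ℝ≥0) : ℝ) := by exact_mod_cast this
      _ = ‖c‖ * ‖f‖ := by push_cast [Lip0.norm_def]; rfl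

variable (M z) in
/-- The evaluation functional `δ_x ∈ Lip₀(M)*`. -/
def evalδ (x : M) : NormedSpace.Dual ℝ ↥(Lip0 M z) :=
  LinearMap.mkContinuous
    { toFun := fun f => (f : M → ℝ) x
      map_add' := fun f g => rfl
      map_smul' := fun c f => rfl }
    (dist x z)
    (by
      intro f
      have := (Lip0.lipschitzWith f).dist_le_mul x z
      simp only [f.2.2, Real.dist_eq, sub_zero] at this
      calc ‖(f : M → ℝ) x‖ = |(f : M → ℝ) x - 0| := by simp
        _ ≤ (lipConst (f : M → ℝ) : ℝ) * dist x z := by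
            simpa [f.2.2, Real.dist_eq] using (Lip0.lipschitzWith f).dist_le_mul x z
        _ = dist x z * ‖f‖ := by rw [Lip0.norm_def, mul_comm])

variable (M z) in
/-- The Lipschitz-free space over `M`: the closed linear span of the evaluation
functionals inside `Lip₀(M)*`. -/
def FreeSpace : Submodule ℝ (NormedSpace.Dual ℝ ↥(Lip0 M z)) :=
  (Submodule.span ℝ (Set.range (evalδ M z))).topologicalClosure

variable (M z) in
/-- The molecule `m_{x y} = (δ_x - δ_y)/d(x,y)` as an element of `Lip₀(M)*`. -/
def molecule (x y : M) : NormedSpace.Dual ℝ ↥(Lip0 M z) :=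
  (dist x y)⁻¹ • (evalδ M z x - evalδ M z y)

theorem molecule_mem_freeSpace (x y : M) : molecule M z x y ∈ FreeSpace M z :=
  Submodule.le_topologicalClosure _
    (Submodule.smul_mem _ _ (Submodule.sub_mem _
      (Submodule.subset_span ⟨x, rfl⟩) (Submodule.subset_span ⟨y, rfl⟩)))

variable (M z) in
/-- The molecule `m_{x y}` as an element of the free space `F(M)`. -/
def mol (x y : M) : ↥(FreeSpace M z) := ⟨molecule M z x y, molecule_mem_freeSpace x y⟩

variable (M) in
/-- A metric space is uniformly discrete if distances between distinct points are
bounded below by a positive constant. -/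
def UniformlyDiscrete : Prop := ∃ θ > (0:ℝ), ∀ x y : M, x ≠ y → θ ≤ dist x y

/-- A norm-one Lipschitz function is local if its Lipschitz constant is approximated
on pairs of arbitrarily close points. -/
def IsLocal (f : ↥(Lip0 M z)) : Prop :=
  ∀ ε > 0, ∃ u v : M, u ≠ v ∧
    ‖f‖ - ε < ((f : M → ℝ) u - (f : M → ℝ) v) / dist u v ∧ dist u v < ε

/-- `f ∈ S_{Lip₀(M)}` is a w*-Daugavet-point: for every w*-slice `S(μ, α)` of
`B_{Lip₀(M)}` (`μ` a norm-one element of `F(M)`) and every `ε > 0` there is `g` in the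
slice with `‖f - g‖ ≥ 2 - ε`. -/
def IsLipWeakStarDaugavetPoint (f : ↥(Lip0 M z)) : Prop :=
  ∀ μ : NormedSpace.Dual ℝ ↥(Lip0 M z), μ ∈ FreeSpace M z → ‖μ‖ = 1 → ∀ α > (0:ℝ), ∀ ε > (0:ℝ),
    ∃ g : ↥(Lip0 M z), ‖g‖ ≤ 1 ∧ 1 - α < μ g ∧ 2 - ε ≤ ‖f - g‖

/-- `f ∈ S_{Lip₀(M)}` is a w*-Δ-point: the same as above, but only for w*-slices
containing `f`. -/
def IsLipWeakStarDeltaPoint (f : ↥(Lip0 M z)) : Prop :=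
  ∀ μ : NormedSpace.Dual ℝ ↥(Lip0 M z), μ ∈ FreeSpace M z → ‖μ‖ = 1 → ∀ α > (0:ℝ),
    1 - α < μ f → ∀ ε > (0:ℝ),
    ∃ g : ↥(Lip0 M z), ‖g‖ ≤ 1 ∧ 1 - α < μ g ∧ 2 - ε ≤ ‖f - g‖

end DeltaPaper

open DeltaPaper

namespace S16

open Metric DeltaPaper

variable {M : Type*} [MetricSpace M] {z : M}

/-- Constructor for elements of `Lip0 M z`. -/
def mk0 (h : M → ℝ) (K : ℝ≥0) (hK : LipschitzWith K h) (h0 : h z = 0) : ↥(Lip0 M z) :=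
  ⟨h, ⟨K, hK⟩, h0⟩

@[simp] lemma mk0_coe (h : M → ℝ) (K : ℝ≥0) (hK : LipschitzWith K h) (h0 : h z = 0) :
    ((mk0 h K hK h0 : ↥(Lip0 M z)) : M → ℝ) = h := rfl

lemma apply_z (f : ↥(Lip0 M z)) : (f : M → ℝ) z = 0 := f.2.2

lemma norm_le_coe (f : ↥(Lip0 M z)) (K : ℝ≥0) (h : LipschitzWith K (f : M → ℝ)) :
    ‖f‖ ≤ (K : ℝ) := by
  rw [Lip0.norm_def]; exact_mod_cast lipConst_le h

lemma lip_of_norm_le {f : ↥(Lip0 M z)} {K : ℝ≥0} (h : ‖f‖ ≤ (K : ℝ)) :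
    LipschitzWith K (f : M → ℝ) := by
  refine (Lip0.lipschitzWith f).weaken ?_
  rw [Lip0.norm_def] at h; exact_mod_cast h

lemma abs_sub_le (f : ↥(Lip0 M z)) (x y : M) :
    |(f : M → ℝ) x - (f : M → ℝ) y| ≤ ‖f‖ * dist x y := by
  have h := (Lip0.lipschitzWith f).dist_le_mul x y
  rw [Real.dist_eq] at h
  rw [Lip0.norm_def]; exact h

lemma abs_apply_le (f : ↥(Lip0 M z)) (x : M) : |(f : M → ℝ) x| ≤ ‖f‖ * dist x z := by
  have h := abs_sub_le f x z
  rwa [apply_z, sub_zero] at h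

lemma norm_ge_slope (f : ↥(Lip0 M z)) {x y : M} (hxy : x ≠ y) {c : ℝ}
    (hc : c * dist x y ≤ |(f : M → ℝ) x - (f : M → ℝ) y|) : c ≤ ‖f‖ := by
  have hd : (0:ℝ) < dist x y := dist_pos.2 hxy
  have h2 := abs_sub_le f x y
  nlinarith

/-- In every slice there is an element of the unit ball. -/
lemma exists_slice_elt (φ : NormedSpace.Dual ℝ ↥(Lip0 M z)) (hφ : ‖φ‖ = 1) {δ : ℝ}
    (hδ : 0 < δ) : ∃ g : ↥(Lip0 M z), ‖g‖ ≤ 1 ∧ 1 - δ < φ g := by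
  by_contra hcon
  push_neg at hcon
  have habs : ∀ g : ↥(Lip0 M z), ‖g‖ ≤ 1 → |φ g| ≤ 1 - δ := by
    intro g hg
    have h1 := hcon g hg
    have h2 := hcon (-g) (by rwa [norm_neg])
    rw [map_neg] at h2
    rw [abs_le]; constructor <;> linarith
  have hnn : (0:ℝ) ≤ 1 - δ := by
    have := habs 0 (by simp)
    simpa using le_trans (abs_nonneg _) this
  have hb : ‖φ‖ ≤ 1 - δ := by
    refine ContinuousLinearMap.opNorm_le_bound _ hnn ?_
    intro x
    rcases eq_or_ne x 0 with rfl | hx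
    · simp
    · have hxn : (0:ℝ) < ‖x‖ := norm_pos_iff.2 hx
      have hu : ‖(‖x‖⁻¹ • x : ↥(Lip0 M z))‖ ≤ 1 := by
        rw [norm_smul, norm_inv, norm_norm]
        rw [inv_mul_cancel₀ (ne_of_gt hxn)]
      have := habs _ hu
      rw [map_smul] at this
      have hx' : |φ x| ≤ (1 - δ) * ‖x‖ := by
        have h3 : |‖x‖⁻¹ * φ x| = ‖x‖⁻¹ * |φ x| := by
          rw [abs_mul, abs_of_nonneg (by positivity)]
        simp only [smul_eq_mul] at this
        rw [h3] at this
        calc |φ x| = ‖x‖ * (‖x‖⁻¹ * |φ x|) := by field_simp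
        _ ≤ ‖x‖ * (1 - δ) := by nlinarith
        _ = (1 - δ) * ‖x‖ := by ring
      simpa [Real.norm_eq_abs] using hx'
  rw [hφ] at hb; linarith

/-- Key pigeonhole: among functions that each differ from `g` on pairwise disjoint
supports, some one is close to `g` in the eyes of `φ`. -/
lemma endgame (φ : NormedSpace.Dual ℝ ↥(Lip0 M z)) (hφ : ‖φ‖ = 1)
    (g : ↥(Lip0 M z)) (hg : ‖g‖ ≤ 1) (K : ℕ) (hK : 0 < K)
    (h : Fin K → ↥(Lip0 M z)) (hh : ∀ k, ‖h k‖ ≤ 1)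
    (hdisj : ∀ i j, i ≠ j → ∀ x : M, (h i : M → ℝ) x ≠ (g : M → ℝ) x →
      (h j : M → ℝ) x = (g : M → ℝ) x) :
    ∃ k, |φ (h k) - φ g| ≤ 4 / K := by
  classical
  set e : Fin K → ↥(Lip0 M z) := fun k => h k - g with he
  have hecoe : ∀ (k : Fin K) (w : M), (e k : M → ℝ) w = (h k : M → ℝ) w - (g : M → ℝ) w :=
    fun k w => rfl
  have he2 : ∀ (k : Fin K) (w v : M),
      |(e k : M → ℝ) w - (e k : M → ℝ) v| ≤ 2 * dist w v := by
    intro k w v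
    have h1 := abs_sub_le (h k) w v
    have h2 := abs_sub_le g w v
    have hn1 : ‖h k‖ * dist w v ≤ 1 * dist w v := mul_le_mul_of_nonneg_right (hh k) dist_nonneg
    have hn2 : ‖g‖ * dist w v ≤ 1 * dist w v := mul_le_mul_of_nonneg_right hg dist_nonneg
    rw [hecoe, hecoe]
    have heq : (h k : M → ℝ) w - (g : M → ℝ) w - ((h k : M → ℝ) v - (g : M → ℝ) v)
        = ((h k : M → ℝ) w - (h k : M → ℝ) v) + -((g : M → ℝ) w - (g : M → ℝ) v) := by ring
    rw [heq]
    refine le_trans (abs_add_le _ _) ?_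
    rw [abs_neg]
    linarith
  have hsupp : ∀ (w : M) (i j : Fin K), (e i : M → ℝ) w ≠ 0 → (e j : M → ℝ) w ≠ 0 → i = j := by
    intro w i j hi hj
    by_contra hij
    have h1 : (h i : M → ℝ) w ≠ (g : M → ℝ) w := fun hq => hi (by rw [hecoe, hq, sub_self])
    have h2 := hdisj i j hij w h1
    exact hj (by rw [hecoe, h2, sub_self])
  set s : Fin K → ℝ := fun k => if 0 ≤ φ (e k) then 1 else -1 with hs
  have hs1 : ∀ k, |s k| = 1 := by
    intro k; by_cases hk : 0 ≤ φ (e k) <;> simp [hs, hk]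
  set E : ↥(Lip0 M z) := ∑ k, s k • e k with hE
  have hEcoe : ∀ w : M, (E : M → ℝ) w = ∑ k, s k * (e k : M → ℝ) w := by
    intro w
    calc (E : M → ℝ) w = ((Lip0 M z).subtype E) w := rfl
    _ = (∑ k, (Lip0 M z).subtype (s k • e k)) w := by rw [hE, map_sum]
    _ = (∑ k, s k • ((Lip0 M z).subtype (e k))) w := by simp only [map_smul]
    _ = ∑ k, s k * (e k : M → ℝ) w := by
        rw [Finset.sum_apply]
        exact Finset.sum_congr rfl fun k _ => rfl
  have hE4 : LipschitzWith 4 (E : M → ℝ) := by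
    apply LipschitzWith.of_dist_le_mul
    intro w v
    rw [Real.dist_eq, hEcoe w, hEcoe v, ← Finset.sum_sub_distrib]
    set T : Finset (Fin K) :=
      Finset.univ.filter (fun k => (e k : M → ℝ) w ≠ 0 ∨ (e k : M → ℝ) v ≠ 0) with hT
    have hTcard : T.card ≤ 2 := by
      have hsub : T ⊆ Finset.univ.filter (fun k => (e k : M → ℝ) w ≠ 0)
          ∪ Finset.univ.filter (fun k => (e k : M → ℝ) v ≠ 0) := by
        intro k hk
        simp only [hT, Finset.mem_filter, Finset.mem_univ, true_and] at hk
        simp only [Finset.mem_union, Finset.mem_filter, Finset.mem_univ, true_and]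
        exact hk
      have c1 : (Finset.univ.filter (fun k => (e k : M → ℝ) w ≠ 0)).card ≤ 1 := by
        refine Finset.card_le_one.2 ?_
        intro a ha b hb
        simp only [Finset.mem_filter, Finset.mem_univ, true_and] at ha hb
        exact hsupp w a b ha hb
      have c2 : (Finset.univ.filter (fun k => (e k : M → ℝ) v ≠ 0)).card ≤ 1 := by
        refine Finset.card_le_one.2 ?_
        intro a ha b hb
        simp only [Finset.mem_filter, Finset.mem_univ, true_and] at ha hb
        exact hsupp v a b ha hb
      calc T.card ≤ _ := Finset.card_le_card hsub
      _ ≤ _ := Finset.card_union_le _ _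
      _ ≤ 2 := by omega
    have hzero : ∀ k ∈ Finset.univ, k ∉ T →
        s k * (e k : M → ℝ) w - s k * (e k : M → ℝ) v = 0 := by
      intro k _ hk
      simp only [hT, Finset.mem_filter, Finset.mem_univ, true_and, not_or, not_not] at hk
      rw [hk.1, hk.2]; ring
    rw [← Finset.sum_subset (Finset.subset_univ T) hzero]
    refine le_trans (Finset.abs_sum_le_sum_abs _ _) ?_
    have hbound : ∀ k ∈ T, |s k * (e k : M → ℝ) w - s k * (e k : M → ℝ) v| ≤ 2 * dist w v := by
      intro k _
      have : s k * (e k : M → ℝ) w - s k * (e k : M → ℝ) v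
          = s k * ((e k : M → ℝ) w - (e k : M → ℝ) v) := by ring
      rw [this, abs_mul, hs1, one_mul]
      exact he2 k w v
    refine le_trans (Finset.sum_le_card_nsmul T _ (2 * dist w v) hbound) ?_
    rw [nsmul_eq_mul]
    have hc : (T.card : ℝ) ≤ 2 := by exact_mod_cast hTcard
    have hd : (0:ℝ) ≤ dist w v := dist_nonneg
    push_cast
    nlinarith
  have hEnorm : ‖E‖ ≤ 4 := by
    have h4 := norm_le_coe E 4 hE4
    simpa using h4
  have hsum : ∑ k, |φ (e k)| ≤ 4 := by
    have h1 : ∑ k, |φ (e k)| = φ E := by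
      rw [hE, map_sum]
      refine Finset.sum_congr rfl ?_
      intro k _
      rw [map_smul, smul_eq_mul]
      by_cases hk : 0 ≤ φ (e k)
      · simp [hs, hk, abs_of_nonneg hk]
      · push_neg at hk
        rw [abs_of_neg hk]
        simp [hs, not_le.2 hk]
    rw [h1]
    calc φ E ≤ |φ E| := le_abs_self _
    _ ≤ ‖φ‖ * ‖E‖ := by rw [← Real.norm_eq_abs]; exact φ.le_opNorm E
    _ ≤ 4 := by rw [hφ]; linarith
  by_contra hall
  push_neg at hall
  have hlt : ∀ k, 4 / K < |φ (e k)| := by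
    intro k
    have hk := hall k
    have heφ : φ (e k) = φ (h k) - φ g := by rw [he]; simp [map_sub]
    rwa [heφ]
  have hne : Nonempty (Fin K) := ⟨⟨0, hK⟩⟩
  have hKpos : (0:ℝ) < K := by exact_mod_cast hK
  have hlt2 : (K : ℝ) * (4 / K) < ∑ k, |φ (e k)| := by
    calc (K:ℝ) * (4/K) = ∑ _k : Fin K, (4/K : ℝ) := by
          rw [Finset.sum_const, Finset.card_univ, Fintype.card_fin, nsmul_eq_mul]
    _ < ∑ k, |φ (e k)| :=
        Finset.sum_lt_sum_of_nonempty Finset.univ_nonempty (fun k _ => hlt k)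
  have h44 : (K:ℝ) * (4/K) = 4 := by field_simp
  rw [h44] at hlt2
  linarith

lemma lip_sub_const {f : M → ℝ} {Kc : ℝ≥0} (hf : LipschitzWith Kc f) (c : ℝ) :
    LipschitzWith Kc (fun x => f x - c) := by
  apply LipschitzWith.of_dist_le_mul
  intro x y
  have h := hf.dist_le_mul x y
  rw [Real.dist_eq] at h ⊢
  simpa [sub_sub_sub_cancel_right] using h

lemma lip_const_sub {f : M → ℝ} {Kc : ℝ≥0} (hf : LipschitzWith Kc f) (c : ℝ) :
    LipschitzWith Kc (fun x => c - f x) := by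
  apply LipschitzWith.of_dist_le_mul
  intro x y
  have h := hf.dist_le_mul x y
  rw [Real.dist_eq] at h ⊢
  have : c - f x - (c - f y) = -(f x - f y) := by ring
  rw [this, abs_neg]
  exact h

lemma build_g (φ : NormedSpace.Dual ℝ ↥(Lip0 M z)) (hφ : ‖φ‖ = 1)
    (f : ↥(Lip0 M z)) (hf : ‖f‖ = 1) {l : ℝ} (hl0 : 0 < l) (hl1 : l ≤ 1/16) :
    ∃ g₀ g : ↥(Lip0 M z), ‖g₀‖ ≤ 1 ∧ ‖g‖ ≤ 1 ∧ 1 - 6*l < φ g ∧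
      ∀ x : M, (g : M → ℝ) x = (1 - l) * (g₀ : M → ℝ) x - l * (f : M → ℝ) x := by
  obtain ⟨g₀, hg₀, hg₀φ⟩ := exists_slice_elt φ hφ (δ := 4*l) (by linarith)
  refine ⟨g₀, (1-l) • g₀ - l • f, hg₀, ?_, ?_, fun x => rfl⟩
  · calc ‖(1-l) • g₀ - l • f‖ ≤ ‖(1-l) • g₀‖ + ‖l • f‖ := norm_sub_le _ _
    _ = |1-l| * ‖g₀‖ + |l| * ‖f‖ := by
        rw [norm_smul, norm_smul, Real.norm_eq_abs, Real.norm_eq_abs]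
    _ = (1-l) * ‖g₀‖ + l * ‖f‖ := by
        rw [abs_of_nonneg (by linarith), abs_of_nonneg (le_of_lt hl0)]
    _ ≤ (1-l) * 1 + l * 1 := by
        have h1 : (0:ℝ) ≤ 1 - l := by linarith
        have h2 := norm_nonneg g₀
        rw [hf]
        nlinarith
    _ = 1 := by ring
  · have hφf : |φ f| ≤ 1 := by
      have h := φ.le_opNorm f
      rw [hφ, hf, one_mul] at h
      simpa [Real.norm_eq_abs] using h
    rw [map_sub, map_smul, map_smul, smul_eq_mul, smul_eq_mul]
    have h1 : (1-l) * (1 - 4*l) < (1-l) * φ g₀ := by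
      have : (0:ℝ) < 1 - l := by linarith
      nlinarith
    have h2 : -(l * φ f) ≥ -l := by nlinarith [abs_le.1 hφf]
    nlinarith

set_option maxHeartbeats 1000000 in
lemma caseU (hU : ∀ r : ℝ, ∃ x : M, r < dist x z) :
    ∃ f : ↥(Lip0 M z), ‖f‖ = 1 ∧ IsDaugavetPoint f := by
  set f : ↥(Lip0 M z) := mk0 (fun x => dist x z) 1 (LipschitzWith.dist_left z)
    (by simp) with hfdef
  have hfx : ∀ x, (f : M → ℝ) x = dist x z := fun x => rfl
  have hf1 : ‖f‖ = 1 := by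
    refine le_antisymm ?_ ?_
    · simpa using norm_le_coe f 1 (LipschitzWith.dist_left z)
    · obtain ⟨x₀, hx₀⟩ := hU 0
      refine norm_ge_slope f (x := x₀) (y := z) ?_ ?_
      · intro hx; rw [hx, dist_self] at hx₀; exact lt_irrefl _ hx₀
      · rw [hfx, hfx, dist_self, sub_zero, one_mul, abs_of_nonneg dist_nonneg]
  refine ⟨f, hf1, ?_⟩
  intro φ α hφ hα ε hε
  set α' : ℝ := min α (1/2) with hα'
  have hα'0 : 0 < α' := lt_min hα (by norm_num)
  have hα'2 : α' ≤ 1/2 := min_le_right _ _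
  have hα'le : α' ≤ α := min_le_left _ _
  set ε' : ℝ := min ε (1/2) with hε'
  have hε'0 : 0 < ε' := lt_min hε (by norm_num)
  have hε'2 : ε' ≤ 1/2 := min_le_right _ _
  have hε'le : ε' ≤ ε := min_le_left _ _
  set l : ℝ := α'/8 with hl
  have hl0 : 0 < l := by positivity
  have hl16 : l ≤ 1/16 := by rw [hl]; linarith
  set ε₂ : ℝ := ε'/4 with hε₂
  have hε₂0 : 0 < ε₂ := by positivity
  have hε₂8 : ε₂ ≤ 1/8 := by rw [hε₂]; linarith
  obtain ⟨g₀, g, hg₀n, hgn, hgφ, hgcoe⟩ := build_g φ hφ f hf1 hl0 hl16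
  have hslack : ∀ x : M, (g : M → ℝ) x ≤ (1 - 2*l) * dist x z := by
    intro x
    have h1 : (g₀ : M→ℝ) x ≤ dist x z := by
      have h2 := abs_apply_le g₀ x
      have h3 : |(g₀:M→ℝ) x| ≤ 1 * dist x z :=
        le_trans h2 (mul_le_mul_of_nonneg_right hg₀n dist_nonneg)
      have h4 := le_abs_self ((g₀:M→ℝ) x)
      linarith
    rw [hgcoe, hfx]
    nlinarith [dist_nonneg (x := x) (y := z)]
  have hgl : ∀ x : M, -(dist x z) ≤ (g:M→ℝ) x := by
    intro x
    have h2 := abs_apply_le g x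
    have h3 : |(g:M→ℝ) x| ≤ 1 * dist x z :=
      le_trans h2 (mul_le_mul_of_nonneg_right hgn dist_nonneg)
    have h4 := neg_abs_le ((g:M→ℝ) x)
    linarith
  set C₀ : ℝ := 4 / (ε₂ * l) with hC₀
  have hC₀1 : 1 ≤ C₀ := by
    rw [hC₀, le_div_iff₀ (by positivity)]
    nlinarith
  obtain ⟨u, hu0, huS⟩ : ∃ u : ℕ → M, 1 ≤ dist (u 0) z ∧
      ∀ k, C₀ * dist (u k) z < dist (u (k+1)) z := by
    choose pick hpick using fun r : ℝ => hU (max 1 r)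
    refine ⟨fun k => Nat.rec (pick 0) (fun _ prev => pick (C₀ * dist prev z)) k, ?_, ?_⟩
    · exact le_of_lt (lt_of_le_of_lt (le_max_left _ _) (hpick 0))
    · intro k
      exact lt_of_le_of_lt (le_max_right _ _) (hpick _)
  set R : ℕ → ℝ := fun k => dist (u k) z with hRdef
  rw [show dist (u 0) z = R 0 from rfl] at hu0
  rw [show (∀ k, C₀ * dist (u k) z < dist (u (k+1)) z) = ∀ k, C₀ * R k < R (k+1) from rfl] at huS
  have hu1 : ∀ k, 1 ≤ R k := by
    intro k
    induction k with
    | zero => exact hu0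
    | succ n ih =>
      have h1 := huS n
      nlinarith
  have humono : ∀ i j : ℕ, i < j → C₀ * R i ≤ R j := by
    intro i j hij
    induction j with
    | zero => omega
    | succ n ih =>
      rcases Nat.lt_succ_iff_lt_or_eq.1 hij with h | h
      · have h1 := ih h
        have h2 := huS n
        have h3 := hu1 n
        nlinarith
      · subst h; exact le_of_lt (huS i)
  set K : ℕ := ⌈(32:ℝ)/α'⌉₊ with hK
  have hKpos : 0 < K := by
    rw [hK]
    exact Nat.ceil_pos.2 (by positivity)
  have hKr : (0:ℝ) < K := by exact_mod_cast hKpos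
  have hK4 : 4 / (K:ℝ) ≤ α'/8 := by
    have h1 : (32:ℝ)/α' ≤ K := Nat.le_ceil _
    rw [div_le_iff₀ hKr]
    have h2 : (32:ℝ) ≤ α' * K := by
      rw [div_le_iff₀ hα'0] at h1
      nlinarith
    nlinarith
  have hglip : LipschitzWith 1 (g : M → ℝ) := lip_of_norm_le (by simpa using hgn)
  have hωlip : ∀ k : ℕ, LipschitzWith 1 (fun x : M => dist x (u k) - (1-ε₂) * R k) :=
    fun k => lip_sub_const (LipschitzWith.dist_left (u k)) _
  have hmk0 : ∀ k : ℕ, (fun x : M => min ((g : M→ℝ) x) (dist x (u k) - (1-ε₂) * R k)) z = 0 := by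
    intro k
    simp only
    rw [apply_z]
    rw [min_eq_left]
    have h1 : dist z (u k) = R k := dist_comm z (u k)
    rw [h1]
    nlinarith [hu1 k]
  set h : Fin K → ↥(Lip0 M z) := fun k =>
    mk0 (fun x => min ((g : M→ℝ) x) (dist x (u k) - (1-ε₂) * R k)) 1
      (by simpa using hglip.min (hωlip k)) (hmk0 k) with hh
  have hhcoe : ∀ (k : Fin K) (x : M),
      (h k : M → ℝ) x = min ((g : M→ℝ) x) (dist x (u k) - (1-ε₂) * R k) := fun k x => rfl
  have hhn : ∀ k, ‖h k‖ ≤ 1 := by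
    intro k
    simpa using norm_le_coe (h k) 1 (by rw [← max_self (1:ℝ≥0)]; exact hglip.min (hωlip k))
  have hfar : ∀ k : Fin K, 2 - ε ≤ ‖f - h k‖ := by
    intro k
    have hRk := hu1 k
    have huk : u (k:ℕ) ≠ z := by
      intro hq
      have : R (k:ℕ) = 0 := by rw [hRdef]; simp [hq]
      rw [this] at hRk; linarith
    have hcoe : ∀ x, ((f - h k : ↥(Lip0 M z)) : M→ℝ) x = (f:M→ℝ) x - (h k:M→ℝ) x :=
      fun x => rfl
    have h1 : (h k : M→ℝ) (u k) ≤ -((1-ε₂) * R k) := by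
      rw [hhcoe]
      refine le_trans (min_le_right _ _) ?_
      rw [dist_self]
      linarith
    have hval : (2 - ε₂) * dist (u (k:ℕ)) z ≤
        |((f - h k : ↥(Lip0 M z)) : M→ℝ) (u k) - ((f - h k : ↥(Lip0 M z)) : M→ℝ) z| := by
      rw [hcoe, hcoe, apply_z f, apply_z (h k), hfx]
      refine le_trans ?_ (le_abs_self _)
      have : dist (u (k:ℕ)) z = R k := rfl
      rw [this]
      nlinarith
    have h2 := norm_ge_slope (f - h k) huk hval
    have h3 : ε₂ ≤ ε := by rw [hε₂]; linarith
    linarith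
  have hsupp : ∀ (k : Fin K) (x : M), (h k : M→ℝ) x ≠ (g:M→ℝ) x →
      ε₂ * R k / 2 < dist x z ∧ dist x z * l < R k := by
    intro k x hx
    have hlt : dist x (u k) - (1-ε₂) * R k < (g:M→ℝ) x := by
      by_contra hc
      push_neg at hc
      exact hx (by rw [hhcoe]; exact min_eq_left hc)
    have htri1 : R (k:ℕ) - dist x z ≤ dist x (u k) := by
      have h1 := dist_triangle (u (k:ℕ)) x z
      have h2 : dist (u (k:ℕ)) x = dist x (u k) := dist_comm _ _
      have h3 : dist (u (k:ℕ)) z = R k := rfl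
      linarith
    have htri2 : dist x z - R (k:ℕ) ≤ dist x (u k) := by
      have h1 := dist_triangle x (u (k:ℕ)) z
      have h3 : dist (u (k:ℕ)) z = R k := rfl
      linarith
    have hs1 := hslack x
    have hld : 0 ≤ l * dist x z := mul_nonneg hl0.le dist_nonneg
    have hεR : 0 ≤ ε₂ * R (k:ℕ) := mul_nonneg hε₂0.le (by linarith [hu1 (k:ℕ)])
    constructor
    · linarith
    · linarith
  have hdisj : ∀ i j : Fin K, i ≠ j → ∀ x : M,
      (h i : M→ℝ) x ≠ (g:M→ℝ) x → (h j : M→ℝ) x = (g:M→ℝ) x := by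
    intro i j hij x hxi
    by_contra hxj
    obtain ⟨hi1, hi2⟩ := hsupp i x hxi
    obtain ⟨hj1, hj2⟩ := hsupp j x hxj
    have hne : (i:ℕ) ≠ (j:ℕ) := fun hq => hij (Fin.ext hq)
    have hCl : C₀ * (ε₂ * l) = 4 := by
      rw [hC₀]
      field_simp
    have hkey : ∀ a b : ℕ, a < b → ε₂ * R b / 2 < dist x z → dist x z * l < R a → False := by
      intro a b hab hb1 ha2
      have hRa := hu1 a
      have hmn := humono a b hab
      have e1 : ε₂ * R b / 2 * l < R a := by
        have := mul_lt_mul_of_pos_right hb1 hl0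
        linarith
      have e2 : ε₂ * (C₀ * R a) / 2 * l ≤ ε₂ * R b / 2 * l := by
        have h5 := mul_le_mul_of_nonneg_left hmn hε₂0.le
        have h6 := mul_le_mul_of_nonneg_right h5 hl0.le
        linarith
      have e3 : ε₂ * (C₀ * R a) / 2 * l = 2 * R a := by
        linear_combination (R a / 2) * hCl
      linarith
    rcases lt_or_gt_of_ne hne with hlt | hlt
    · exact hkey (i:ℕ) (j:ℕ) hlt hj1 hi2
    · exact hkey (j:ℕ) (i:ℕ) hlt hi1 hj2
  obtain ⟨k, hk⟩ := endgame φ hφ g hgn K hKpos h hhn hdisj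
  refine ⟨h k, hhn k, ?_, hfar k⟩
  have habs := (abs_le.1 hk).1
  have h6l : 6*l = 3*α'/4 := by rw [hl]; ring
  linarith

set_option maxHeartbeats 1600000 in
/-- Core construction for the case of an "anchor function" `F` (distance to a point of `M`
or to an ideal point of the completion). -/
lemma caseA_main (F : M → ℝ) (hF1 : LipschitzWith 1 F) (hF0 : ∀ x, 0 ≤ F x)
    (hFd : ∀ x y : M, dist x y ≤ F x + F y)
    (f : ↥(Lip0 M z)) (hfx : ∀ x, (f : M → ℝ) x = F z - F x) (hf1 : ‖f‖ = 1)
    (φ : NormedSpace.Dual ℝ ↥(Lip0 M z)) (hφ : ‖φ‖ = 1)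
    {l ε₂ : ℝ} (hl0 : 0 < l) (hl16 : l ≤ 1/16) (hε₂0 : 0 < ε₂) (hε₂8 : ε₂ ≤ 1/8)
    (K : ℕ) (hKpos : 0 < K) (hK4 : 4 / (K:ℝ) ≤ l)
    (p q : ℕ → M) (qs : M)
    (hσpos : ∀ k, 0 < F (p k))
    (hσmono : ∀ a b : ℕ, a < b → F (p b) < l*ε₂/8 * F (p a))
    (hq : ∀ k, F (q k) < ε₂/8 * F (p k))
    (hqs : F qs ≤ ε₂/8 * F (p (K-1)))
    (hbranch : (qs = z ∧ F z = 0) ∨ (2 * F (p 0) ≤ l * F z ∧ F qs ≤ l * F z)) :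
    ∃ y : ↥(Lip0 M z), ‖y‖ ≤ 1 ∧ 1 - 8*l < φ y ∧ 2 - 4*ε₂ ≤ ‖f - y‖ := by
  have hc1 : l*ε₂/8 ≤ 1 := by nlinarith
  have hσanti : ∀ a b : ℕ, a ≤ b → F (p b) ≤ F (p a) := by
    intro a b hab
    rcases eq_or_lt_of_le hab with rfl | hlt
    · exact le_refl _
    · have h1 := hσmono a b hlt
      have h2 := hσpos a
      nlinarith
  obtain ⟨g₀, g, hg₀n, hgn, hgφ, hgcoe⟩ := build_g φ hφ f hf1 hl0 hl16
  set G : ℝ := (g : M → ℝ) qs with hG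
  have habs1 : ∀ x : M, |(g₀ : M → ℝ) x - (g₀ : M → ℝ) qs| ≤ dist x qs := by
    intro x
    have h := abs_sub_le g₀ x qs
    have := mul_le_mul_of_nonneg_right hg₀n (dist_nonneg (x := x) (y := qs))
    linarith
  have hgabs : ∀ x y : M, |(g : M → ℝ) x - (g : M → ℝ) y| ≤ dist x y := by
    intro x y
    have h := abs_sub_le g x y
    have := mul_le_mul_of_nonneg_right hgn (dist_nonneg (x := x) (y := y))
    linarith
  have hGnear : ∀ x : M, |(g : M → ℝ) x - G| ≤ F x + F qs := by
    intro x
    exact le_trans (hgabs x qs) (hFd x qs)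
  have hGs : ∀ x : M, -((1-2*l) * F x) - F qs ≤ (g : M → ℝ) x - G := by
    intro x
    rw [hgcoe x, hG, hgcoe qs, hfx, hfx]
    have h1 : -(dist x qs) ≤ (g₀ : M → ℝ) x - (g₀ : M → ℝ) qs := by
      have := neg_abs_le ((g₀ : M → ℝ) x - (g₀ : M → ℝ) qs)
      linarith [habs1 x]
    have h2 := hFd x qs
    nlinarith
  have hωz : ∀ k : ℕ, G + (1-ε₂) * F (p k) - dist z (p k) ≤ 0 := by
    intro k
    have hdzp : F (p k) - F z ≤ dist z (p k) := by
      have h := hF1.dist_le_mul (p k) z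
      rw [Real.dist_eq, NNReal.coe_one, one_mul] at h
      have h2 := le_abs_self (F (p k) - F z)
      rw [dist_comm]
      linarith
    have hσk0 : F (p k) ≤ F (p 0) := hσanti 0 k (Nat.zero_le k)
    have hσk : 0 < F (p k) := hσpos k
    have hdzp2 : F z - F (p k) ≤ dist z (p k) := by
      have h := hF1.dist_le_mul z (p k)
      rw [Real.dist_eq, NNReal.coe_one, one_mul] at h
      have h2 := le_abs_self (F z - F (p k))
      linarith
    have hεσ : 0 ≤ ε₂ * F (p k) := mul_nonneg hε₂0.le hσk.le
    rcases hbranch with ⟨hqz, hFz⟩ | ⟨hs0, hqsz⟩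
    · have hG0 : G = 0 := by rw [hG, hqz, apply_z]
      linarith
    · have hGle : G ≤ (1-2*l)*F z + F qs := by
        rw [hG, hgcoe qs, hfx]
        have h1 : (g₀ : M → ℝ) qs ≤ dist qs z := by
          have h2 := abs_apply_le g₀ qs
          have h3 := mul_le_mul_of_nonneg_right hg₀n (dist_nonneg (x := qs) (y := z))
          have h4 := le_abs_self ((g₀ : M → ℝ) qs)
          linarith
        have h2 : dist qs z ≤ F qs + F z := hFd qs z
        nlinarith [hF0 qs, hF0 z]
      linarith
  set σ : ℕ → ℝ := fun k => F (p k) with hσ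
  have hglip : LipschitzWith 1 (g : M → ℝ) := lip_of_norm_le (by simpa using hgn)
  have hωlip : ∀ k : ℕ, LipschitzWith 1 (fun x : M => (G + (1-ε₂) * σ k) - dist x (p k)) :=
    fun k => lip_const_sub (LipschitzWith.dist_left (p k)) _
  have hmkz : ∀ k : ℕ,
      (fun x : M => max ((g : M→ℝ) x) ((G + (1-ε₂) * σ k) - dist x (p k))) z = 0 := by
    intro k
    simp only
    rw [apply_z]
    rw [max_eq_left]
    have := hωz k
    linarith
  set h : Fin K → ↥(Lip0 M z) := fun k =>
    mk0 (fun x => max ((g : M→ℝ) x) ((G + (1-ε₂) * σ (k:ℕ)) - dist x (p k))) 1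
      (by simpa using hglip.max (hωlip (k:ℕ))) (hmkz (k:ℕ)) with hh
  have hhcoe : ∀ (k : Fin K) (x : M),
      (h k : M → ℝ) x = max ((g : M→ℝ) x) ((G + (1-ε₂) * σ (k:ℕ)) - dist x (p k)) :=
    fun k x => rfl
  have hhn : ∀ k, ‖h k‖ ≤ 1 := by
    intro k
    simpa using norm_le_coe (h k) 1 (by rw [← max_self (1:ℝ≥0)]; exact hglip.max (hωlip (k:ℕ)))
  have hqsk : ∀ k : Fin K, F qs ≤ ε₂/8 * σ (k:ℕ) := by
    intro k
    have h1 : F (p (K-1)) ≤ F (p (k:ℕ)) := hσanti (k:ℕ) (K-1) (by omega)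
    have h2 : (0:ℝ) < ε₂/8 := by positivity
    have := mul_le_mul_of_nonneg_left h1 h2.le
    exact le_trans hqs this
  have hfar : ∀ k : Fin K, 2 - 4*ε₂ ≤ ‖f - h k‖ := by
    intro k
    set δ : ℝ := F (q (k:ℕ)) with hδ
    have hδ8 : δ < ε₂/8 * σ (k:ℕ) := hq (k:ℕ)
    have hσk : 0 < σ (k:ℕ) := hσpos (k:ℕ)
    have hδ0 : 0 ≤ δ := hF0 _
    have hFqs0 : 0 ≤ F qs := hF0 _
    have hqsk' := hqsk k
    have hpq : q (k:ℕ) ≠ p (k:ℕ) := by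
      intro hqp
      rw [hδ, hqp] at hδ8
      nlinarith
    have hdqp : dist (q (k:ℕ)) (p (k:ℕ)) ≤ δ + σ (k:ℕ) := hFd _ _
    have hdqp2 : σ (k:ℕ) - δ ≤ dist (q (k:ℕ)) (p (k:ℕ)) := by
      have hll := hF1.dist_le_mul (p (k:ℕ)) (q (k:ℕ))
      rw [Real.dist_eq, NNReal.coe_one, one_mul] at hll
      have h2 := le_abs_self (F (p (k:ℕ)) - F (q (k:ℕ)))
      rw [dist_comm]
      linarith
    -- h k agrees with g at q k
    have hhq : (h k : M → ℝ) (q (k:ℕ)) = (g : M → ℝ) (q (k:ℕ)) := by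
      rw [hhcoe]
      apply max_eq_left
      have h1 : (G + (1-ε₂) * σ (k:ℕ)) - dist (q (k:ℕ)) (p (k:ℕ))
          ≤ G - ε₂ * σ (k:ℕ) + δ := by nlinarith
      have h2 : G - (δ + F qs) ≤ (g : M → ℝ) (q (k:ℕ)) := by
        have := neg_abs_le ((g : M → ℝ) (q (k:ℕ)) - G)
        linarith [hGnear (q (k:ℕ))]
      nlinarith
    have hhp : (G + (1-ε₂) * σ (k:ℕ)) ≤ (h k : M → ℝ) (p (k:ℕ)) := by
      rw [hhcoe]
      refine le_trans ?_ (le_max_right _ _)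
      rw [dist_self]
      linarith
    have hgq : (g : M → ℝ) (q (k:ℕ)) ≤ G + δ + F qs := by
      have := le_abs_self ((g : M → ℝ) (q (k:ℕ)) - G)
      linarith [hGnear (q (k:ℕ))]
    have hnum : (2 - 2*ε₂) * σ (k:ℕ) ≤
        ((f : M→ℝ) (q (k:ℕ)) - (h k : M→ℝ) (q (k:ℕ)))
          - ((f : M→ℝ) (p (k:ℕ)) - (h k : M→ℝ) (p (k:ℕ))) := by
      rw [hfx, hfx, hhq]
      nlinarith
    have hval : (2 - 4*ε₂) * dist (q (k:ℕ)) (p (k:ℕ)) ≤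
        |((f - h k : ↥(Lip0 M z)) : M→ℝ) (q (k:ℕ)) - ((f - h k : ↥(Lip0 M z)) : M→ℝ) (p (k:ℕ))| := by
      have hcoe : ∀ x, ((f - h k : ↥(Lip0 M z)) : M→ℝ) x = (f:M→ℝ) x - (h k:M→ℝ) x :=
        fun x => rfl
      rw [hcoe, hcoe]
      refine le_trans ?_ (le_abs_self _)
      have e1 : (2 - 4*ε₂) * dist (q (k:ℕ)) (p (k:ℕ)) ≤ (2 - 4*ε₂) * (δ + σ (k:ℕ)) := by
        apply mul_le_mul_of_nonneg_left hdqp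
        linarith
      have e2 : (2 - 4*ε₂) * (δ + σ (k:ℕ)) ≤ (2 - 2*ε₂) * σ (k:ℕ) := by nlinarith
      linarith
    have h2 := norm_ge_slope (f - h k) hpq hval
    linarith
  have hsupp : ∀ (k : Fin K) (x : M), (h k : M→ℝ) x ≠ (g:M→ℝ) x →
      ε₂ * σ (k:ℕ) / 4 < F x ∧ l * F x < 2 * σ (k:ℕ) := by
    intro k x hx
    have hσk : 0 < σ (k:ℕ) := hσpos (k:ℕ)
    have hqsk' := hqsk k
    have hFx0 := hF0 x
    have hFqs0 : 0 ≤ F qs := hF0 qs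
    have hlt : (g:M→ℝ) x < (G + (1-ε₂) * σ (k:ℕ)) - dist x (p (k:ℕ)) := by
      by_contra hc
      push_neg at hc
      exact hx (by rw [hhcoe]; exact max_eq_left hc)
    have htri1 : σ (k:ℕ) - F x ≤ dist x (p (k:ℕ)) := by
      have hll := hF1.dist_le_mul (p (k:ℕ)) x
      rw [Real.dist_eq, NNReal.coe_one, one_mul] at hll
      have h2 := le_abs_self (F (p (k:ℕ)) - F x)
      rw [dist_comm]
      linarith
    have htri2 : F x - σ (k:ℕ) ≤ dist x (p (k:ℕ)) := by
      have hll := hF1.dist_le_mul x (p (k:ℕ))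
      rw [Real.dist_eq, NNReal.coe_one, one_mul] at hll
      have h2 := le_abs_self (F x - F (p (k:ℕ)))
      linarith
    have hs1 := hGs x
    have hs2 : (g:M→ℝ) x - G ≥ -(F x + F qs) := by
      have := neg_abs_le ((g:M→ℝ) x - G)
      linarith [hGnear x]
    constructor
    · nlinarith
    · nlinarith
  have hdisj : ∀ i j : Fin K, i ≠ j → ∀ x : M,
      (h i : M→ℝ) x ≠ (g:M→ℝ) x → (h j : M→ℝ) x = (g:M→ℝ) x := by
    intro i j hij x hxi
    by_contra hxj
    obtain ⟨hi1, hi2⟩ := hsupp i x hxi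
    obtain ⟨hj1, hj2⟩ := hsupp j x hxj
    have hne : (i:ℕ) ≠ (j:ℕ) := fun hq => hij (Fin.ext hq)
    have hkey : ∀ a b : ℕ, a < b →
        ε₂ * σ a / 4 < F x → l * F x < 2 * σ b → False := by
      intro a b hab ha1 hb2
      have h1 := hσmono a b hab
      have h2 := hσpos a
      have h3 := mul_lt_mul_of_pos_left ha1 hl0
      nlinarith
    rcases lt_or_gt_of_ne hne with hlt | hlt
    · exact hkey (i:ℕ) (j:ℕ) hlt hi1 hj2
    · exact hkey (j:ℕ) (i:ℕ) hlt hj1 hi2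
  obtain ⟨k, hk⟩ := endgame φ hφ g hgn K hKpos h hhn hdisj
  refine ⟨h k, hhn k, ?_, hfar k⟩
  have habs := (abs_le.1 hk).1
  linarith

set_option maxHeartbeats 1600000 in
lemma caseA (F : M → ℝ) (hF1 : LipschitzWith 1 F) (hF0 : ∀ x, 0 ≤ F x)
    (hFd : ∀ x y : M, dist x y ≤ F x + F y)
    (hFs : ∀ θ : ℝ, 0 < θ → ∃ p, 0 < F p ∧ F p < θ) :
    ∃ f : ↥(Lip0 M z), ‖f‖ = 1 ∧ IsDaugavetPoint f := by
  set f : ↥(Lip0 M z) := mk0 (fun x => F z - F x) 1 (lip_const_sub hF1 (F z))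
    (by simp) with hfdef
  have hfx : ∀ x, (f : M → ℝ) x = F z - F x := fun x => rfl
  have hf1 : ‖f‖ = 1 := by
    refine le_antisymm (by simpa using norm_le_coe f 1 (lip_const_sub hF1 (F z))) ?_
    by_contra hcon
    push_neg at hcon
    have hc0 : 0 ≤ ‖f‖ := norm_nonneg f
    set ρ : ℝ := (1 - ‖f‖)/4 with hρ
    have hρ0 : 0 < ρ := by rw [hρ]; linarith
    obtain ⟨pp, hp0, hp1⟩ := hFs 1 one_pos
    obtain ⟨qq, hq0, hq1⟩ := hFs (ρ * F pp) (by positivity)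
    have h1 := abs_sub_le f pp qq
    have hfpq : (f:M→ℝ) pp - (f:M→ℝ) qq = F qq - F pp := by rw [hfx, hfx]; ring
    have h2 : F pp - F qq ≤ |(f:M→ℝ) pp - (f:M→ℝ) qq| := by
      rw [hfpq, abs_sub_comm]
      exact le_abs_self _
    have h3 : dist pp qq ≤ F pp + F qq := hFd pp qq
    have h4 : ‖f‖ * dist pp qq ≤ ‖f‖ * (F pp + F qq) := mul_le_mul_of_nonneg_left h3 hc0
    nlinarith
  refine ⟨f, hf1, ?_⟩
  intro φ α hφ hα ε hε
  set α' : ℝ := min α (1/2) with hα'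
  have hα'0 : 0 < α' := lt_min hα (by norm_num)
  have hα'2 : α' ≤ 1/2 := min_le_right _ _
  have hα'le : α' ≤ α := min_le_left _ _
  set ε' : ℝ := min ε (1/2) with hε'
  have hε'0 : 0 < ε' := lt_min hε (by norm_num)
  have hε'2 : ε' ≤ 1/2 := min_le_right _ _
  have hε'le : ε' ≤ ε := min_le_left _ _
  set l : ℝ := α'/8 with hl
  have hl0 : 0 < l := by positivity
  have hl16 : l ≤ 1/16 := by rw [hl]; linarith
  set ε₂ : ℝ := ε'/4 with hε₂
  have hε₂0 : 0 < ε₂ := by positivity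
  have hε₂8 : ε₂ ≤ 1/8 := by rw [hε₂]; linarith
  set K : ℕ := ⌈(32:ℝ)/α'⌉₊ with hK
  have hKpos : 0 < K := by
    rw [hK]
    exact Nat.ceil_pos.2 (by positivity)
  have hKr : (0:ℝ) < K := by exact_mod_cast hKpos
  have hK4 : 4 / (K:ℝ) ≤ l := by
    have h1 : (32:ℝ)/α' ≤ K := Nat.le_ceil _
    rw [div_le_iff₀ hKr, hl]
    have h2 : (32:ℝ) ≤ α' * K := by
      rw [div_le_iff₀ hα'0] at h1
      nlinarith
    nlinarith
  have hc8pos : (0:ℝ) < l*ε₂/8 := by positivity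
  have hsites : ∀ s₀ : ℝ, 0 < s₀ → ∃ p : ℕ → M, F (p 0) < s₀ ∧ (∀ k, 0 < F (p k)) ∧
      ∀ k, F (p (k+1)) < l*ε₂/8 * F (p k) := by
    intro s₀ hs₀
    have hstep : ∀ t : ℝ, 0 < t → 0 < l*ε₂/8 * t := fun t ht => mul_pos hc8pos ht
    choose pick hpick using hFs
    let Q : ℕ → {x : M // 0 < F x} := fun k => Nat.rec
      (⟨pick s₀ hs₀, (hpick s₀ hs₀).1⟩ : {x : M // 0 < F x})
      (fun _ prev => ⟨pick (l*ε₂/8 * F prev.1) (hstep _ prev.2), (hpick _ _).1⟩) k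
    refine ⟨fun k => (Q k).1, (hpick s₀ hs₀).2, fun k => (Q k).2, fun k => ?_⟩
    exact (hpick (l*ε₂/8 * F (Q k).1) (hstep _ (Q k).2)).2
  have hc81 : l*ε₂/8 ≤ 1 := by nlinarith
  have hσmono' : ∀ (p : ℕ → M), (∀ k, 0 < F (p k)) →
      (∀ k, F (p (k+1)) < l*ε₂/8 * F (p k)) →
      ∀ a b : ℕ, a < b → F (p b) < l*ε₂/8 * F (p a) := by
    intro p hpos hstep a b hab
    induction b with
    | zero => omega
    | succ n ih =>
      rcases Nat.lt_succ_iff_lt_or_eq.1 hab with hcase | hcase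
      · have h1 := ih hcase
        have h2 := hstep n
        have h4 := hpos a
        have h5 := mul_lt_mul_of_pos_left h1 hc8pos
        have h6 : l*ε₂/8 * (l*ε₂/8 * F (p a)) ≤ l*ε₂/8 * F (p a) := by
          nlinarith [mul_nonneg (mul_nonneg hc8pos.le h4.le) (sub_nonneg.2 hc81)]
        linarith
      · subst hcase; exact hstep a
  -- partners
  have hpartner : ∀ (p : ℕ → M), (∀ k, 0 < F (p k)) →
      ∃ qq : ℕ → M, ∀ k, F (qq k) < ε₂/8 * F (p k) := by
    intro p hpos
    choose pick hpick using hFs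
    exact ⟨fun k => pick (ε₂/8 * F (p k)) (mul_pos (by positivity) (hpos k)),
      fun k => (hpick _ _).2⟩
  rcases (hF0 z).lt_or_eq with hFz | hFz
  · -- 0 < F z
    obtain ⟨p, hp0, hppos, hpstep⟩ := hsites (l * F z / 2) (by positivity)
    obtain ⟨qq, hqq⟩ := hpartner p hppos
    obtain ⟨qs, hqs0, hqs1⟩ := hFs (min (ε₂/8 * F (p (K-1))) (l * F z))
      (lt_min (mul_pos (by positivity) (hppos _)) (by positivity))
    obtain ⟨y, hy1, hy2, hy3⟩ := caseA_main F hF1 hF0 hFd f hfx hf1 φ hφ hl0 hl16 hε₂0 hε₂8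
      K hKpos hK4 p qq qs hppos (hσmono' p hppos hpstep) hqq
      (le_of_lt (lt_of_lt_of_le hqs1 (min_le_left _ _)))
      (Or.inr ⟨by linarith, le_of_lt (lt_of_lt_of_le hqs1 (min_le_right _ _))⟩)
    refine ⟨y, hy1, ?_, ?_⟩
    · have : 8 * l = α' := by rw [hl]; ring
      linarith
    · have : 4 * ε₂ = ε' := by rw [hε₂]; ring
      linarith
  · -- F z = 0
    obtain ⟨p, hp0, hppos, hpstep⟩ := hsites 1 one_pos
    obtain ⟨qq, hqq⟩ := hpartner p hppos
    obtain ⟨y, hy1, hy2, hy3⟩ := caseA_main F hF1 hF0 hFd f hfx hf1 φ hφ hl0 hl16 hε₂0 hε₂8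
      K hKpos hK4 p qq z hppos (hσmono' p hppos hpstep) hqq
      (by rw [← hFz]; exact le_of_lt (mul_pos (by positivity) (hppos _)))
      (Or.inl ⟨rfl, hFz.symm⟩)
    refine ⟨y, hy1, ?_, ?_⟩
    · have : 8 * l = α' := by rw [hl]; ring
      linarith
    · have : 4 * ε₂ = ε' := by rw [hε₂]; ring
      linarith

set_option maxHeartbeats 1600000 in
lemma caseC (σ0 : ℝ) (hσ0 : 0 < σ0) (xs ys : ℕ → M)
    (hsep : ∀ n m : ℕ, n ≠ m → σ0 ≤ dist (xs n) (xs m))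
    (hz : ∀ n, σ0/2 ≤ dist (xs n) z)
    (hnexy : ∀ n, xs n ≠ ys n)
    (ht : ∀ n, dist (xs n) (ys n) ≤ σ0 * (1/2)^(n+2)) :
    ∃ f : ↥(Lip0 M z), ‖f‖ = 1 ∧ IsDaugavetPoint f := by
  set S : Set M := Set.range xs with hS
  have hSne : S.Nonempty := ⟨xs 0, ⟨0, rfl⟩⟩
  set D : M → ℝ := fun w => Metric.infDist w S with hD
  have hD1 : LipschitzWith 1 D := Metric.lipschitz_infDist_pt S
  have hD0 : ∀ w, 0 ≤ D w := fun w => Metric.infDist_nonneg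
  have hDx : ∀ n, D (xs n) = 0 := fun n => Metric.infDist_zero_of_mem ⟨n, rfl⟩
  set t : ℕ → ℝ := fun n => dist (xs n) (ys n) with htdef
  have htpos : ∀ n, 0 < t n := fun n => dist_pos.2 (hnexy n)
  have htq : ∀ n, t n ≤ σ0/4 := by
    intro n
    have h1 := ht n
    have h2 : ((1:ℝ)/2)^(n+2) ≤ (1/2)^2 := by
      apply pow_le_pow_of_le_one (by norm_num) (by norm_num)
      omega
    nlinarith
  have hty : ∀ n, t n ≤ D (ys n) := by
    intro n
    by_contra hcon
    push_neg at hcon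
    rw [hD] at hcon
    obtain ⟨w, hwS, hw⟩ := (Metric.infDist_lt_iff hSne).1 hcon
    obtain ⟨m, rfl⟩ := hwS
    rcases eq_or_ne m n with rfl | hmn
    · rw [dist_comm] at hw
      exact lt_irrefl _ hw
    · have h1 := hsep n m hmn.symm
      have h2 := dist_triangle (xs n) (ys n) (xs m)
      have h3 := htq n
      linarith
  set f : ↥(Lip0 M z) := mk0 (fun w => Metric.infDist z S - Metric.infDist w S) 1
    (lip_const_sub (Metric.lipschitz_infDist_pt S) _) (by simp) with hfdef
  have hfx : ∀ w, (f : M → ℝ) w = Metric.infDist z S - D w := fun w => rfl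
  have hf1 : ‖f‖ = 1 := by
    refine le_antisymm ?_ ?_
    · simpa using norm_le_coe f 1 (lip_const_sub (Metric.lipschitz_infDist_pt S) _)
    refine norm_ge_slope f (hnexy 0) ?_
    rw [hfx, hfx, one_mul]
    have h1 : (Metric.infDist z S - D (xs 0)) - (Metric.infDist z S - D (ys 0))
        = D (ys 0) := by rw [hDx 0]; ring
    rw [h1]
    rw [abs_of_nonneg (hD0 _)]
    exact hty 0
  refine ⟨f, hf1, ?_⟩
  intro φ α hφ hα ε hε
  set α' : ℝ := min α (1/2) with hα'
  have hα'0 : 0 < α' := lt_min hα (by norm_num)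
  have hα'2 : α' ≤ 1/2 := min_le_right _ _
  have hα'le : α' ≤ α := min_le_left _ _
  set ε' : ℝ := min ε (1/2) with hε'
  have hε'0 : 0 < ε' := lt_min hε (by norm_num)
  have hε'2 : ε' ≤ 1/2 := min_le_right _ _
  have hε'le : ε' ≤ ε := min_le_left _ _
  set l : ℝ := α'/8 with hl
  have hl0 : 0 < l := by positivity
  have hl16 : l ≤ 1/16 := by rw [hl]; linarith
  set ε₂ : ℝ := ε'/4 with hε₂
  have hε₂0 : 0 < ε₂ := by positivity
  have hε₂8 : ε₂ ≤ 1/8 := by rw [hε₂]; linarith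
  set K : ℕ := ⌈(32:ℝ)/α'⌉₊ with hK
  have hKpos : 0 < K := by
    rw [hK]
    exact Nat.ceil_pos.2 (by positivity)
  have hKr : (0:ℝ) < K := by exact_mod_cast hKpos
  have hK4 : 4 / (K:ℝ) ≤ α'/8 := by
    have h1 : (32:ℝ)/α' ≤ K := Nat.le_ceil _
    rw [div_le_iff₀ hKr]
    have h2 : (32:ℝ) ≤ α' * K := by
      rw [div_le_iff₀ hα'0] at h1
      nlinarith
    nlinarith
  obtain ⟨N, hN⟩ : ∃ N : ℕ, ((1:ℝ)/2)^N < l/8 :=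
    exists_pow_lt_of_lt_one (by positivity) (by norm_num)
  have htl : ∀ k : ℕ, t (N + k) ≤ l * σ0 / 8 := by
    intro k
    have h1 := ht (N + k)
    have h2 : ((1:ℝ)/2)^(N + k + 2) ≤ (1/2)^N := by
      apply pow_le_pow_of_le_one (by norm_num) (by norm_num)
      omega
    nlinarith
  obtain ⟨g₀, g, hg₀n, hgn, hgφ, hgcoe⟩ := build_g φ hφ f hf1 hl0 hl16
  have hglip : LipschitzWith 1 (g : M → ℝ) := lip_of_norm_le (by simpa using hgn)
  have hgabs : ∀ x y : M, |(g : M → ℝ) x - (g : M → ℝ) y| ≤ dist x y := by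
    intro x y
    have h := abs_sub_le g x y
    have := mul_le_mul_of_nonneg_right hgn (dist_nonneg (x := x) (y := y))
    linarith
  have hg₀d : ∀ x : M, (g₀ : M → ℝ) x ≤ dist x z := by
    intro x
    have h2 := abs_apply_le g₀ x
    have h3 := mul_le_mul_of_nonneg_right hg₀n (dist_nonneg (x := x) (y := z))
    have h4 := le_abs_self ((g₀ : M → ℝ) x)
    linarith
  have hc₀0 : 0 ≤ Metric.infDist z S := Metric.infDist_nonneg
  have hωz : ∀ k : ℕ, ((g : M→ℝ) (xs (N+k)) + (1-ε₂) * t (N+k)) - dist z (ys (N+k)) ≤ 0 := by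
    intro k
    have h1 : (g : M→ℝ) (xs (N+k)) ≤ (1-l) * dist (xs (N+k)) z - l * Metric.infDist z S := by
      rw [hgcoe, hfx, hDx]
      have := hg₀d (xs (N+k))
      nlinarith
    have h2 : dist z (xs (N+k)) - t (N+k) ≤ dist z (ys (N+k)) := by
      have := dist_triangle z (xs (N+k)) (ys (N+k))
      have h3 := dist_triangle z (ys (N+k)) (xs (N+k))
      rw [dist_comm (ys (N+k)) (xs (N+k))] at h3
      linarith [dist_triangle z (xs (N+k)) (ys (N+k))]
    have h4 := htl k
    have h5 := hz (N+k)
    rw [dist_comm z (xs (N+k))] at h2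
    have e1 : l * (σ0/2) ≤ l * dist (xs (N+k)) z :=
      mul_le_mul_of_nonneg_left h5 hl0.le
    have e2 : 0 ≤ l * Metric.infDist z S := mul_nonneg hl0.le hc₀0
    have e3 : 0 ≤ ε₂ * t (N+k) := mul_nonneg hε₂0.le (htpos _).le
    have e4 : dist (xs (N+k)) z - t (N+k) ≤ dist z (ys (N+k)) := h2
    nlinarith
  have hωlip : ∀ k : ℕ, LipschitzWith 1
      (fun w : M => ((g : M→ℝ) (xs (N+k)) + (1-ε₂) * t (N+k)) - dist w (ys (N+k))) :=
    fun k => lip_const_sub (LipschitzWith.dist_left (ys (N+k))) _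
  have hmkz : ∀ k : ℕ,
      (fun w : M => max ((g : M→ℝ) w)
        (((g : M→ℝ) (xs (N+k)) + (1-ε₂) * t (N+k)) - dist w (ys (N+k)))) z = 0 := by
    intro k
    simp only
    rw [apply_z, max_eq_left (hωz k)]
  set h : Fin K → ↥(Lip0 M z) := fun k =>
    mk0 (fun w => max ((g : M→ℝ) w)
      (((g : M→ℝ) (xs (N+(k:ℕ))) + (1-ε₂) * t (N+(k:ℕ))) - dist w (ys (N+(k:ℕ))))) 1
      (by simpa using hglip.max (hωlip (k:ℕ))) (hmkz (k:ℕ)) with hh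
  have hhcoe : ∀ (k : Fin K) (w : M), (h k : M → ℝ) w = max ((g : M→ℝ) w)
      (((g : M→ℝ) (xs (N+(k:ℕ))) + (1-ε₂) * t (N+(k:ℕ))) - dist w (ys (N+(k:ℕ)))) :=
    fun k w => rfl
  have hhn : ∀ k, ‖h k‖ ≤ 1 := by
    intro k
    simpa using norm_le_coe (h k) 1 (by rw [← max_self (1:ℝ≥0)]; exact hglip.max (hωlip (k:ℕ)))
  have hfar : ∀ k : Fin K, 2 - ε ≤ ‖f - h k‖ := by
    intro k
    set n : ℕ := N + (k:ℕ) with hn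
    have htn := htpos n
    have hhx : (h k : M → ℝ) (xs n) = (g : M → ℝ) (xs n) := by
      rw [hhcoe]
      apply max_eq_left
      have hεt : 0 ≤ ε₂ * t n := mul_nonneg hε₂0.le (htpos n).le
      rw [← hn]
      nlinarith
    have hhy : ((g : M→ℝ) (xs n) + (1-ε₂) * t n) ≤ (h k : M → ℝ) (ys n) := by
      rw [hhcoe, ← hn]
      refine le_trans ?_ (le_max_right _ _)
      rw [dist_self]
      linarith
    have hval : (2 - ε₂) * dist (xs n) (ys n) ≤
        |((f - h k : ↥(Lip0 M z)) : M→ℝ) (xs n) - ((f - h k : ↥(Lip0 M z)) : M→ℝ) (ys n)| := by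
      have hcoe : ∀ w, ((f - h k : ↥(Lip0 M z)) : M→ℝ) w = (f:M→ℝ) w - (h k:M→ℝ) w :=
        fun w => rfl
      rw [hcoe, hcoe, hfx, hfx, hDx, hhx]
      refine le_trans ?_ (le_abs_self _)
      have h1 := hty n
      have h2 := hhy
      have h3 : (2 - ε₂) * dist (xs n) (ys n) = (2 - ε₂) * t n := rfl
      rw [h3]
      nlinarith
    have h2 := norm_ge_slope (f - h k) (hnexy n) hval
    have h3 : ε₂ ≤ ε := by rw [hε₂]; linarith
    linarith
  have hsupp : ∀ (k : Fin K) (w : M), (h k : M→ℝ) w ≠ (g:M→ℝ) w →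
      dist w (xs (N+(k:ℕ))) < σ0/4 := by
    intro k w hw
    set n : ℕ := N + (k:ℕ) with hn
    have hlt : (g:M→ℝ) w < ((g : M→ℝ) (xs n) + (1-ε₂) * t n) - dist w (ys n) := by
      by_contra hc
      push_neg at hc
      exact hw (by rw [hhcoe, ← hn]; exact max_eq_left hc)
    have h1 : (g:M→ℝ) w - (g:M→ℝ) (xs n) ≥ -(1-l) * dist w (xs n) + l * D w := by
      rw [hgcoe w, hgcoe (xs n), hfx, hfx, hDx]
      have h2 : -(dist w (xs n)) ≤ (g₀:M→ℝ) w - (g₀:M→ℝ) (xs n) := by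
        have h3 := abs_sub_le g₀ w (xs n)
        have h4 := mul_le_mul_of_nonneg_right hg₀n (dist_nonneg (x := w) (y := xs n))
        have h5 := neg_abs_le ((g₀:M→ℝ) w - (g₀:M→ℝ) (xs n))
        linarith
      nlinarith
    have h2 : dist w (xs n) - t n ≤ dist w (ys n) := by
      have h3 := dist_triangle w (ys n) (xs n)
      rw [dist_comm (ys n) (xs n)] at h3
      linarith
    have h3 : l * dist w (xs n) + l * D w < 2 * t n := by
      have e3 : 0 ≤ ε₂ * t n := mul_nonneg hε₂0.le (htpos _).le
      linarith
    have h4 := htl (k:ℕ)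
    have h5 : 0 ≤ l * D w := mul_nonneg hl0.le (hD0 w)
    rw [← hn] at h4
    have h6 : l * dist w (xs n) < 2 * (l * σ0 / 8) := by linarith
    have h7 : l * dist w (xs n) < l * (σ0/4) := by linarith
    exact (mul_lt_mul_iff_right₀ hl0).1 h7
  have hdisj : ∀ i j : Fin K, i ≠ j → ∀ w : M,
      (h i : M→ℝ) w ≠ (g:M→ℝ) w → (h j : M→ℝ) w = (g:M→ℝ) w := by
    intro i j hij w hwi
    by_contra hwj
    have hi := hsupp i w hwi
    have hj := hsupp j w hwj
    have hne2 : N + (i:ℕ) ≠ N + (j:ℕ) := by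
      intro hq
      exact hij (Fin.ext (by omega))
    have hs := hsep (N+(i:ℕ)) (N+(j:ℕ)) hne2
    have htr := dist_triangle (xs (N+(i:ℕ))) w (xs (N+(j:ℕ)))
    rw [dist_comm (xs (N+(i:ℕ))) w] at htr
    linarith
  obtain ⟨k, hk⟩ := endgame φ hφ g hgn K hKpos h hhn hdisj
  refine ⟨h k, hhn k, ?_, hfar k⟩
  have habs := (abs_le.1 hk).1
  have h6l : 6*l = 3*α'/4 := by rw [hl]; ring
  linarith

set_option maxHeartbeats 800000 in
lemma caseA_of_cauchy (w : ℕ → M) (hw : CauchySeq w) (hinj : Function.Injective w) :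
    ∃ f : ↥(Lip0 M z), ‖f‖ = 1 ∧ IsDaugavetPoint f := by
  have hconv : ∀ x : M, ∃ L : ℝ,
      Filter.Tendsto (fun k => dist x (w k)) Filter.atTop (nhds L) := by
    intro x
    have h1 : LipschitzWith 1 (dist x) := LipschitzWith.dist_right x
    exact cauchySeq_tendsto_of_complete (h1.cauchySeq_comp hw)
  choose F hF using hconv
  have hF1 : LipschitzWith 1 F := by
    apply LipschitzWith.of_dist_le_mul
    intro x y
    rw [Real.dist_eq, NNReal.coe_one, one_mul]
    have ht : Filter.Tendsto (fun k => |dist x (w k) - dist y (w k)|) Filter.atTop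
        (nhds |F x - F y|) := ((hF x).sub (hF y)).abs
    refine le_of_tendsto ht (Filter.Eventually.of_forall ?_)
    intro k
    exact abs_dist_sub_le x y (w k)
  have hF0 : ∀ x, 0 ≤ F x := by
    intro x
    exact ge_of_tendsto (hF x) (Filter.Eventually.of_forall fun k => dist_nonneg)
  have hFd : ∀ x y : M, dist x y ≤ F x + F y := by
    intro x y
    have ht : Filter.Tendsto (fun k => dist x (w k) + dist y (w k)) Filter.atTop
        (nhds (F x + F y)) := (hF x).add (hF y)
    refine ge_of_tendsto ht (Filter.Eventually.of_forall ?_)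
    intro k
    calc dist x y ≤ dist x (w k) + dist (w k) y := dist_triangle _ _ _
    _ = dist x (w k) + dist y (w k) := by rw [dist_comm (w k) y]
  have hFs : ∀ θ : ℝ, 0 < θ → ∃ p, 0 < F p ∧ F p < θ := by
    intro θ hθ
    obtain ⟨N, hN⟩ := Metric.cauchySeq_iff.1 hw (θ/2) (by positivity)
    have hFb : ∀ m, N ≤ m → F (w m) ≤ θ/2 := by
      intro m hm
      refine le_of_tendsto (hF (w m)) ?_
      rw [Filter.eventually_atTop]
      exact ⟨N, fun k hk => le_of_lt (hN m hm k hk)⟩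
    have hnot : ¬ (F (w N) = 0 ∧ F (w (N+1)) = 0) := by
      rintro ⟨h1, h2⟩
      have h3 := hFd (w N) (w (N+1))
      rw [h1, h2] at h3
      have h4 : w N = w (N+1) := by
        have := dist_nonneg (x := w N) (y := w (N+1))
        exact dist_le_zero.1 (by linarith)
      exact (by omega : N ≠ N + 1) (hinj h4)
    rcases (hF0 (w N)).lt_or_eq with h1 | h1
    · exact ⟨w N, h1, lt_of_le_of_lt (hFb N le_rfl) (by linarith)⟩
    · have h2 : 0 < F (w (N+1)) := by
        rcases (hF0 (w (N+1))).lt_or_eq with h2 | h2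
        · exact h2
        · exact absurd ⟨h1.symm, h2.symm⟩ hnot
      exact ⟨w (N+1), h2, lt_of_le_of_lt (hFb (N+1) (by omega)) (by linarith)⟩
  exact caseA F hF1 hF0 hFd hFs

lemma cauchy_of_limit_point (c : M)
    (hc : ∀ r : ℝ, 0 < r → ∃ v : M, v ≠ c ∧ dist c v < r) :
    ∃ w : ℕ → M, CauchySeq w ∧ Function.Injective w := by
  choose pick h1 h2 using hc
  have hd : ∀ (v : M), v ≠ c → 0 < dist c v := by
    intro v hv
    rw [dist_pos]
    exact fun h => hv h.symm
  let Q : ℕ → {v : M // v ≠ c} := fun k => Nat.rec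
    (⟨pick 1 one_pos, h1 1 one_pos⟩ : {v : M // v ≠ c})
    (fun k' prev => ⟨pick (min ((1/2)^(k'+1)) (dist c prev.1))
      (lt_min (by positivity) (hd prev.1 prev.2)), h1 _ _⟩) k
  set wseq : ℕ → M := fun k => (Q k).1 with hwseq
  have hQd : ∀ k, dist c (wseq (k+1)) < min ((1/2)^(k+1)) (dist c (wseq k)) :=
    fun k => h2 _ _
  have hlt : ∀ k, dist c (wseq (k+1)) < dist c (wseq k) :=
    fun k => lt_of_lt_of_le (hQd k) (min_le_right _ _)
  have hpow : ∀ k, dist c (wseq (k+1)) < (1/2)^(k+1) :=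
    fun k => lt_of_lt_of_le (hQd k) (min_le_left _ _)
  have hdec : ∀ i j : ℕ, i < j → dist c (wseq j) < dist c (wseq i) := by
    intro i j hij
    induction j with
    | zero => omega
    | succ n ih =>
      rcases Nat.lt_succ_iff_lt_or_eq.1 hij with hcase | hcase
      · exact lt_trans (hlt n) (ih hcase)
      · subst hcase; exact hlt i
  have hinj : Function.Injective wseq := by
    intro i j hij
    by_contra hne
    rcases lt_or_gt_of_ne hne with hcase | hcase
    · have := hdec i j hcase; rw [hij] at this; exact lt_irrefl _ this
    · have := hdec j i hcase; rw [hij] at this; exact lt_irrefl _ this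
  refine ⟨wseq, ?_, hinj⟩
  rw [Metric.cauchySeq_iff']
  intro ε hε
  obtain ⟨m, hm⟩ := exists_pow_lt_of_lt_one (x := ε/2) (y := (1/2:ℝ)) (by positivity)
    (by norm_num)
  refine ⟨m+1, fun n hn => ?_⟩
  have h2n : dist c (wseq (m+1)) < (1/2)^(m+1) := hpow m
  have h1n : dist c (wseq n) ≤ dist c (wseq (m+1)) := by
    rcases eq_or_lt_of_le hn with hcase | hcase
    · rw [hcase]
    · exact le_of_lt (hdec (m+1) n hcase)
  have h3 : ((1:ℝ)/2)^(m+1) ≤ (1/2)^m := by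
    apply pow_le_pow_of_le_one (by norm_num) (by norm_num)
    omega
  calc dist (wseq n) (wseq (m+1)) ≤ dist (wseq n) c + dist c (wseq (m+1)) :=
        dist_triangle _ _ _
  _ = dist c (wseq n) + dist c (wseq (m+1)) := by rw [dist_comm (wseq n) c]
  _ < ε := by linarith

set_option maxHeartbeats 1600000 in
lemma exists_sep (a b : ℕ → M)
    (hab : ∀ j : ℕ, a j ≠ b j ∧ dist (a j) (b j) < (1/2)^j)
    (hC : ¬ ∃ w : ℕ → M, CauchySeq w ∧ Function.Injective w)
    (hNL : ∀ c : M, ∃ r : ℝ, 0 < r ∧ ∀ v : M, v ≠ c → r ≤ dist c v) :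
    ∃ εs : ℝ, 0 < εs ∧ ∀ (P : Finset M) (N : ℕ), ∃ j, N ≤ j ∧
      ∀ pt ∈ P, εs ≤ dist (a j) pt := by
  by_contra hcon
  push_neg at hcon
  choose P N hPN using fun k : ℕ => hcon ((1/2)^k) (by positivity)
  set U : Ultrafilter ℕ := Ultrafilter.of Filter.atTop with hU
  have hUle : (U : Filter ℕ) ≤ Filter.atTop := Ultrafilter.of_le _
  have hmem_inf : ∀ S : Set ℕ, S ∈ U → S.Infinite := by
    intro S hS
    by_contra hfin
    rw [Set.not_infinite] at hfin
    have hc1 : Sᶜ ∈ Filter.atTop := by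
      rw [← Nat.cofinite_eq_atTop]
      exact hfin.compl_mem_cofinite
    have hc2 : Sᶜ ∈ U := hUle hc1
    have hc3 := Filter.inter_mem hS hc2
    rw [Set.inter_compl_self] at hc3
    exact Filter.empty_notMem (U : Filter ℕ) hc3
  have hcell : ∀ k : ℕ, ∃ pt : M, {j : ℕ | dist (a j) pt < (1/2)^k} ∈ U := by
    intro k
    have hcover : {j : ℕ | N k ≤ j} ⊆
        ⋃ pt ∈ (P k : Set M), {j : ℕ | dist (a j) pt < (1/2)^k} := by
      intro j hj
      obtain ⟨pt, hpt1, hpt2⟩ := hPN k j hj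
      exact Set.mem_biUnion hpt1 hpt2
    have hm1 : {j : ℕ | N k ≤ j} ∈ U := hUle (Filter.mem_atTop (N k))
    have hm2 : (⋃ pt ∈ (P k : Set M), {j : ℕ | dist (a j) pt < (1/2)^k}) ∈ U :=
      Filter.mem_of_superset hm1 hcover
    obtain ⟨pt, _, hpt⟩ := (Ultrafilter.finite_biUnion_mem_iff (P k).finite_toSet).1 hm2
    exact ⟨pt, hpt⟩
  choose ptk hptk using hcell
  set A : ℕ → Set ℕ := fun k => {j : ℕ | dist (a j) (ptk k) < (1/2)^k} with hA
  have hB : ∀ k : ℕ, (⋂ i ∈ Finset.range (k+1), A i) ∈ U := by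
    intro k
    exact (Filter.biInter_finset_mem _).2 fun i _ => hptk i
  have hgt : ∀ (S : Set ℕ), S.Infinite → ∀ m : ℕ, ∃ j, j ∈ S ∧ m < j := by
    intro S hS m
    by_contra hcon2
    push_neg at hcon2
    exact hS (Set.Finite.subset (Set.finite_Iic m) (fun j hj => hcon2 j hj))
  have hBne : ∀ k m : ℕ, ∃ j, j ∈ (⋂ i ∈ Finset.range (k+1), A i) ∧ m < j :=
    fun k m => hgt _ (hmem_inf _ (hB k)) m
  choose jf hjf1 hjf2 using hBne
  set ji : ℕ → ℕ := fun k => Nat.rec (jf 0 0) (fun k' prev => jf (k'+1) prev) k with hji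
  have hji_mem : ∀ k, ji k ∈ ⋂ i ∈ Finset.range (k+1), A i := by
    intro k
    cases k with
    | zero => exact hjf1 0 0
    | succ n => exact hjf1 (n+1) (ji n)
  have hji_mono : StrictMono ji :=
    strictMono_nat_of_lt_succ (fun k => hjf2 (k+1) (ji k))
  have hjiA : ∀ i k : ℕ, i ≤ k → dist (a (ji k)) (ptk i) < (1/2)^i := by
    intro i k hik
    have hmem := hji_mem k
    simp only [Set.mem_iInter] at hmem
    exact hmem i (Finset.mem_range.2 (by omega))
  set u : ℕ → M := fun k => a (ji k) with hu
  have hucauchy : CauchySeq u := by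
    rw [Metric.cauchySeq_iff']
    intro ε hε
    obtain ⟨m, hm⟩ := exists_pow_lt_of_lt_one (x := ε/2) (y := (1/2:ℝ)) (by positivity)
      (by norm_num)
    refine ⟨m, fun n hn => ?_⟩
    have hn1 := hjiA m n hn
    have hn2 := hjiA m m le_rfl
    calc dist (u n) (u m) ≤ dist (a (ji n)) (ptk m) + dist (ptk m) (a (ji m)) :=
          dist_triangle _ _ _
    _ = dist (a (ji n)) (ptk m) + dist (a (ji m)) (ptk m) := by rw [dist_comm (ptk m)]
    _ < ε := by linarith
  by_cases hval : ∃ cc : M, ∀ m : ℕ, ∃ k, m ≤ k ∧ u k = cc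
  · obtain ⟨cc, hcc⟩ := hval
    obtain ⟨r, hr0, hrv⟩ := hNL cc
    obtain ⟨m, hm⟩ := exists_pow_lt_of_lt_one (x := r) (y := (1/2:ℝ)) hr0 (by norm_num)
    obtain ⟨k, hk1, hk2⟩ := hcc m
    have hjik : m ≤ ji k := le_trans hk1 (le_trans (hji_mono.le_apply) le_rfl)
    have habk := hab (ji k)
    have hbne : b (ji k) ≠ cc := by
      rw [← hk2]
      exact fun hq => habk.1 hq.symm
    have hge := hrv (b (ji k)) hbne
    have hlt2 : dist cc (b (ji k)) < (1/2)^(ji k) := by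
      rw [← hk2]
      exact habk.2
    have hple : ((1:ℝ)/2)^(ji k) ≤ (1/2)^m := by
      apply pow_le_pow_of_le_one (by norm_num) (by norm_num) hjik
    linarith
  · push_neg at hval
    choose mf hmf using hval
    set idx : ℕ → ℕ := fun s => Nat.rec 0 (fun _ prev =>
      max (prev + 1) ((Finset.range (prev+1)).sup (fun i => mf (u i)))) s with hidx
    have hidxS : ∀ s, idx (s+1) =
        max (idx s + 1) ((Finset.range (idx s + 1)).sup (fun i => mf (u i))) :=
      fun s => rfl
    have hidx_mono : StrictMono idx := by
      apply strictMono_nat_of_lt_succ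
      intro s
      rw [hidxS]
      omega
    have hidx_dom : ∀ i s : ℕ, i < s → mf (u (idx i)) ≤ idx s := by
      intro i s his
      have h0 : i ≤ idx i := hidx_mono.le_apply
      have h1 : mf (u (idx i)) ≤ idx (i+1) := by
        rw [hidxS]
        refine le_trans ?_ (le_max_right _ _)
        have hmem : idx i ∈ Finset.range (idx i + 1) := Finset.mem_range.2 (Nat.lt_succ_self _)
        exact Finset.le_sup (f := fun i' => mf (u i')) hmem
      rcases eq_or_lt_of_le (Nat.succ_le_of_lt his) with hcase | hcase
      · rw [← hcase]; exact h1
      · exact le_trans h1 (le_of_lt (hidx_mono hcase))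
    have hinj2 : Function.Injective (u ∘ idx) := by
      intro i j hij
      by_contra hne
      have hkey : ∀ s t : ℕ, s < t → u (idx t) ≠ u (idx s) := by
        intro s t hst
        exact hmf (u (idx s)) (idx t) (hidx_dom s t hst)
      rcases lt_or_gt_of_ne hne with hcase | hcase
      · exact hkey i j hcase hij.symm
      · exact hkey j i hcase hij
    exact hC ⟨u ∘ idx, hucauchy.comp_tendsto hidx_mono.tendsto_atTop, hinj2⟩

set_option maxHeartbeats 800000 in
lemma extraction (hNU : ∀ θ : ℝ, 0 < θ → ∃ x y : M, x ≠ y ∧ dist x y < θ)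
    (hC : ¬ ∃ w : ℕ → M, CauchySeq w ∧ Function.Injective w) :
    ∃ (σ0 : ℝ) (xs ys : ℕ → M), 0 < σ0 ∧ (∀ n m, n ≠ m → σ0 ≤ dist (xs n) (xs m)) ∧
      (∀ n, σ0/2 ≤ dist (xs n) z) ∧ (∀ n, xs n ≠ ys n) ∧
      (∀ n, dist (xs n) (ys n) ≤ σ0 * (1/2)^(n+2)) := by
  classical
  obtain ⟨a, b, hab⟩ : ∃ a b : ℕ → M, ∀ j : ℕ, a j ≠ b j ∧ dist (a j) (b j) < (1/2)^j := by
    choose aa bb h1 h2 using fun j : ℕ => hNU ((1/2)^j) (by positivity)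
    exact ⟨aa, bb, fun j => ⟨h1 j, h2 j⟩⟩
  have hNL : ∀ c : M, ∃ r : ℝ, 0 < r ∧ ∀ v : M, v ≠ c → r ≤ dist c v := by
    intro c
    by_contra hcon
    push_neg at hcon
    refine hC (cauchy_of_limit_point c ?_)
    intro r hr
    obtain ⟨v, h1, h2⟩ := hcon r hr
    exact ⟨v, h1, h2⟩
  obtain ⟨εs, hεs0, hsep⟩ := exists_sep a b hab hC hNL
  obtain ⟨m0, hm0⟩ := exists_pow_lt_of_lt_one (x := εs) (y := (1/2:ℝ)) hεs0 (by norm_num)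
  choose jf hjf1 hjf2 using hsep
  set T : ℕ → Finset M := fun n => Nat.rec {z}
    (fun n' prev => insert (a (jf prev (m0+n'+2))) prev) n with hT
  set j : ℕ → ℕ := fun n => jf (T n) (m0+n+2) with hj
  have hTz : ∀ n, z ∈ T n := by
    intro n
    induction n with
    | zero => exact Finset.mem_singleton_self z
    | succ n ih => exact Finset.mem_insert_of_mem ih
  have hTstep : ∀ n, T (n+1) = insert (a (j n)) (T n) := fun n => rfl
  have hTmem : ∀ m n : ℕ, m < n → a (j m) ∈ T n := by
    intro m n hmn
    induction n with
    | zero => omega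
    | succ n ih =>
      rw [hTstep]
      rcases Nat.lt_succ_iff_lt_or_eq.1 hmn with hcase | hcase
      · exact Finset.mem_insert_of_mem (ih hcase)
      · subst hcase; exact Finset.mem_insert_self _ _
  set xs : ℕ → M := fun n => a (j n) with hxs
  set ys : ℕ → M := fun n => b (j n) with hys
  have hjN : ∀ n, m0 + n + 2 ≤ j n := fun n => hjf1 _ _
  have hsep2 : ∀ m n : ℕ, m < n → εs ≤ dist (xs n) (xs m) :=
    fun m n hmn => hjf2 (T n) (m0+n+2) (a (j m)) (hTmem m n hmn)
  refine ⟨εs, xs, ys, hεs0, ?_, ?_, ?_, ?_⟩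
  · intro n m hnm
    rcases lt_or_gt_of_ne hnm with hcase | hcase
    · rw [dist_comm]; exact hsep2 n m hcase
    · exact hsep2 m n hcase
  · intro n
    have h1 := hjf2 (T n) (m0+n+2) z (hTz n)
    linarith
  · intro n
    exact (hab (j n)).1
  · intro n
    have h1 := (hab (j n)).2
    have h2 : ((1:ℝ)/2)^(j n) ≤ (1/2)^(m0+n+2) :=
      pow_le_pow_of_le_one (by norm_num) (by norm_num) (hjN n)
    have h3 : ((1:ℝ)/2)^(m0+n+2) = (1/2)^m0 * (1/2)^(n+2) := by
      rw [show m0+n+2 = m0+(n+2) by omega, pow_add]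
    have h4 : ((1:ℝ)/2)^m0 * ((1:ℝ)/2)^(n+2) ≤ εs * (1/2)^(n+2) :=
      mul_le_mul_of_nonneg_right (le_of_lt hm0) (by positivity)
    have h5 : dist (xs n) (ys n) = dist (a (j n)) (b (j n)) := rfl
    rw [h5]
    calc dist (a (j n)) (b (j n)) ≤ ((1:ℝ)/2)^(j n) := le_of_lt h1
    _ ≤ (1/2)^(m0+n+2) := h2
    _ = (1/2)^m0 * (1/2)^(n+2) := h3
    _ ≤ εs * (1/2)^(n+2) := h4

end S16


/-- Corollary 5.2. If `M` is unbounded or not uniformly discrete, then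
`Lip₀(M)` contains a Daugavet-point. -/
theorem statement16 {M : Type*} [MetricSpace M] (z : M)
    (h : ¬ Bornology.IsBounded (Set.univ : Set M) ∨ ¬ UniformlyDiscrete M) :
    ∃ f : ↥(Lip0 M z), ‖f‖ = 1 ∧ IsDaugavetPoint f := by
  rcases h with hU | hNU
  · have hU' : ∀ r : ℝ, ∃ x : M, r < dist x z := by
      intro r
      by_contra hcon
      push_neg at hcon
      refine hU ((Metric.isBounded_iff_subset_closedBall z).2 ⟨r, fun x _ => ?_⟩)
      exact Metric.mem_closedBall.2 (hcon x)
    exact S16.caseU hU'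
  · have hNU' : ∀ θ : ℝ, 0 < θ → ∃ x y : M, x ≠ y ∧ dist x y < θ := by
      intro θ hθ
      by_contra hcon
      push_neg at hcon
      exact hNU ⟨θ, hθ, fun x y hxy => hcon x y hxy⟩
    by_cases hC : ∃ w : ℕ → M, CauchySeq w ∧ Function.Injective w
    · obtain ⟨w, h1, h2⟩ := hC
      exact S16.caseA_of_cauchy w h1 h2
    · obtain ⟨σ0, xs, ys, h1, h2, h3, h4, h5⟩ := S16.extraction (z := z) hNU' hC
      exact S16.caseC σ0 h1 xs ys h2 h3 h4 h5
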